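/- Fix bits x, y, t, h₁, h₂, p ∈ ZMod 2. Let v = e_x ⊗ e_t ∈ ℂ² ⊗ ℂ² be the computational basis state prepared by Alice (case s = 0 of Protocol 1), and let U = (Z^p ⊗ Z^p) · (Y^{h₁} ⊗ Y^{h₂}) · CNOT^{1-y} be Bob's operation (the CNOT is applied exactly when y = 0). Then there exist bits m₁, m₂ ∈ ZMod 2 and a complex number c with ‖c‖ = 1 such that U v = c • (e_{m₁} ⊗ e_{m₂}) and m₁ + m₂ + t = x * y + h₁ + h₂. In particular, Alice's Z-basis measurement outcomes are deterministic and her output bit m₁ + m₂ + t equals x·y plus Bob's output bit h₁ + h₂. -/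

import Mathlib

open Matrix Kronecker

noncomputable section

/-- Computational basis state of a qubit, indexed by `ZMod 2`. -/
def ket (b : ZMod 2) : ZMod 2 → ℂ := fun i => if i = b then 1 else 0

/-- Tensor product of two single-qubit states. -/
def tens (v w : ZMod 2 → ℂ) : ZMod 2 × ZMod 2 → ℂ := fun p => v p.1 * w p.2

def Yg : Matrix (ZMod 2) (ZMod 2) ℂ := !![0, -Complex.I; Complex.I, 0]

def Zg : Matrix (ZMod 2) (ZMod 2) ℂ := !![1, 0; 0, -1]

/-- The CNOT gate (first qubit is the control): sends `e_a ⊗ e_b` to `e_a ⊗ e_{a+b}`. -/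
def CNOT : Matrix (ZMod 2 × ZMod 2) (ZMod 2 × ZMod 2) ℂ :=
  Matrix.of fun i j => if i.1 = j.1 ∧ i.2 = j.1 + j.2 then 1 else 0

lemma sum_zmod2 {M : Type*} [AddCommMonoid M] (f : ZMod 2 → M) : ∑ i, f i = f 0 + f 1 := by
  have : (Finset.univ : Finset (ZMod 2)) = {0, 1} := by decide
  rw [this, Finset.sum_pair (by decide)]

lemma zmod2_cases (b : ZMod 2) : b = 0 ∨ b = 1 := by revert b; decide

lemma Yg_ket (b : ZMod 2) : Yg.mulVec (ket b) = (Complex.I * (-1)^b.val) • ket (b+1) := by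
  funext i
  rcases zmod2_cases b with rfl | rfl <;> rcases zmod2_cases i with rfl | rfl <;>
    simp [Yg, Matrix.mulVec, dotProduct, sum_zmod2, ket,
      show ((1:ZMod 2)+1:ZMod 2)=0 from rfl, ZMod.val_zero, ZMod.val_one] <;> rfl

lemma Zg_ket (b : ZMod 2) : Zg.mulVec (ket b) = ((-1:ℂ)^b.val) • ket b := by
  funext i
  rcases zmod2_cases b with rfl | rfl <;> rcases zmod2_cases i with rfl | rfl <;>
    simp [Zg, Matrix.mulVec, dotProduct, sum_zmod2, ket, ZMod.val_zero, ZMod.val_one] <;> rfl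

lemma z2 (a : ZMod 2) : a + a = 0 := by fin_cases a <;> rfl

lemma Yg_pow_ket (h b : ZMod 2) :
    ∃ c : ℂ, ‖c‖ = 1 ∧ (Yg ^ h.val).mulVec (ket b) = c • ket (b + h) := by
  rcases zmod2_cases h with rfl | rfl
  · exact ⟨1, by norm_num, by simp [Matrix.one_mulVec]⟩
  · refine ⟨Complex.I * (-1)^b.val, ?_, by simpa [ZMod.val_one] using Yg_ket b⟩
    rcases zmod2_cases b with rfl | rfl <;> simp [ZMod.val_zero, ZMod.val_one]

lemma Zg_pow_ket (p b : ZMod 2) :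
    ∃ c : ℂ, ‖c‖ = 1 ∧ (Zg ^ p.val).mulVec (ket b) = c • ket b := by
  rcases zmod2_cases p with rfl | rfl
  · exact ⟨1, by norm_num, by simp [Matrix.one_mulVec]⟩
  · refine ⟨(-1)^b.val, ?_, by simpa [ZMod.val_one] using Zg_ket b⟩
    rcases zmod2_cases b with rfl | rfl <;> simp [ZMod.val_zero, ZMod.val_one]

lemma kron_mulVec (A B : Matrix (ZMod 2) (ZMod 2) ℂ) (v w : ZMod 2 → ℂ) :
    (A ⊗ₖ B).mulVec (tens v w) = tens (A.mulVec v) (B.mulVec w) := by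
  funext q
  simp only [Matrix.mulVec, dotProduct, tens, kroneckerMap_apply, Fintype.sum_prod_type]
  rw [Finset.sum_mul_sum]
  exact Finset.sum_congr rfl fun i _ => Finset.sum_congr rfl fun j _ => by ring

lemma CNOT_ket (a b : ZMod 2) :
    CNOT.mulVec (tens (ket a) (ket b)) = tens (ket a) (ket (a + b)) := by
  funext q
  obtain ⟨i, j⟩ := q
  rcases zmod2_cases a with rfl | rfl <;> rcases zmod2_cases b with rfl | rfl <;>
    rcases zmod2_cases i with rfl | rfl <;> rcases zmod2_cases j with rfl | rfl <;>
    simp [CNOT, Matrix.mulVec, dotProduct, Fintype.sum_prod_type, sum_zmod2, ket, tens,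
      show ((1:ZMod 2)+1:ZMod 2)=0 from rfl]

lemma tens_smul (c d : ℂ) (v w : ZMod 2 → ℂ) :
    tens (c • v) (d • w) = (c * d) • tens v w := by
  funext q; simp [tens]; ring

/-- Correctness of Protocol 1 in the case `s = 0`: Alice prepares `|x⟩|t⟩`, Bob applies
`(Z^p ⊗ Z^p)(Y^{h₁} ⊗ Y^{h₂}) CNOT^{1-y}`; the result is, up to a unit phase, a
computational basis state `e_{m₁} ⊗ e_{m₂}` with `m₁ + m₂ + t = x·y + h₁ + h₂`. -/
theorem protocol1_correct_s0 (x y t h₁ h₂ p : ZMod 2) :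
    ∃ (m₁ m₂ : ZMod 2) (c : ℂ), ‖c‖ = 1 ∧
      (((Zg ^ p.val) ⊗ₖ (Zg ^ p.val)) * ((Yg ^ h₁.val) ⊗ₖ (Yg ^ h₂.val))
          * CNOT ^ (1 - y).val).mulVec (tens (ket x) (ket t))
        = c • tens (ket m₁) (ket m₂) ∧
      m₁ + m₂ + t = x * y + h₁ + h₂ := by
  -- the state after the CNOT step
  have hC : ∃ u : ZMod 2, u + t = x * y + x ∧
      (CNOT ^ (1 - y).val).mulVec (tens (ket x) (ket t)) = tens (ket x) (ket u) := by
    rcases zmod2_cases y with rfl | rfl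
    · refine ⟨x + t, ?_, by simpa [ZMod.val_one] using CNOT_ket x t⟩
      show x + t + t = x * 0 + x
      rw [mul_zero, zero_add, add_assoc, z2, add_zero]
    · refine ⟨t, ?_, by simp [Matrix.one_mulVec]⟩
      show t + t = x * 1 + x
      rw [z2 t, mul_one, z2 x]
  obtain ⟨u, hu, hCu⟩ := hC
  obtain ⟨c₁, hc₁, hY₁⟩ := Yg_pow_ket h₁ x
  obtain ⟨c₂, hc₂, hY₂⟩ := Yg_pow_ket h₂ u
  obtain ⟨d₁, hd₁, hZ₁⟩ := Zg_pow_ket p (x + h₁)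
  obtain ⟨d₂, hd₂, hZ₂⟩ := Zg_pow_ket p (u + h₂)
  refine ⟨x + h₁, u + h₂, c₁ * c₂ * (d₁ * d₂), ?_, ?_, ?_⟩
  · simp [norm_mul, hc₁, hc₂, hd₁, hd₂]
  · rw [← Matrix.mulVec_mulVec, ← Matrix.mulVec_mulVec, hCu, kron_mulVec, hY₁, hY₂,
      tens_smul, Matrix.mulVec_smul, kron_mulVec, hZ₁, hZ₂, tens_smul, smul_smul]
  · -- (x+h₁) + (u+h₂) + t = x*y + h₁ + h₂ given u + t = x*y + x
    have e1 : x + h₁ + (u + h₂) + t = (u + t) + x + h₁ + h₂ := by ring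
    rw [e1, hu, show x * y + x + x + h₁ + h₂ = x * y + (x + x) + h₁ + h₂ from by ring,
      z2, add_zero]
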